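/- In the preferential attachment graph process G_1^t with vertices arriving one at a time, fix a vertex r that forms a self-loop at its arrival (so its tree has total degree 2X(t) where X(t) is the size of the isolated tree component of G_1^t rooted at r, X(r) = 1). Given G_1^t, X(t+1) = X(t)+1 with probability 2X(t)/(2t+1) and X(t+1) = X(t) otherwise. Then for every positive integer ℓ, the process M(t) = X(t)(X(t)+1)···(X(t)+ℓ−1) / ∏_{j=0}^{ℓ−1}(2(t+j)+1), for t ≥ r, is a martingale with respect to the natural filtration. -/

import Mathlib

open MeasureTheory Finset

lemma rf_key_identity (ℓ : ℕ) (hℓ : 1 ≤ ℓ) (x T : ℝ) (hT : 0 ≤ T) :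
    (∏ j ∈ range ℓ, (x + j)) / (∏ j ∈ range ℓ, (2 * (T + 1 + j) + 1))
      + ((∏ j ∈ range ℓ, (x + 1 + j)) - ∏ j ∈ range ℓ, (x + j))
        / (∏ j ∈ range ℓ, (2 * (T + 1 + j) + 1)) * (2 * x / (2 * T + 1))
    = (∏ j ∈ range ℓ, (x + j)) / ∏ j ∈ range ℓ, (2 * (T + j) + 1) := by
  obtain ⟨k, rfl⟩ : ∃ k, ℓ = k + 1 := ⟨ℓ - 1, by omega⟩
  have hP : ∏ j ∈ range (k+1), (x + (j:ℝ)) = (∏ j ∈ range k, (x + 1 + j)) * x := by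
    rw [prod_range_succ']
    push_cast
    refine congrArg₂ _ (prod_congr rfl fun j _ => by ring) (by ring)
  have hP' : ∏ j ∈ range (k+1), (x + 1 + (j:ℝ))
      = (∏ j ∈ range k, (x + 1 + j)) * (x + 1 + k) := prod_range_succ _ _
  have hQ : ∏ j ∈ range (k+1), (2 * (T + (j:ℝ)) + 1)
      = (∏ j ∈ range k, (2 * (T + 1 + j) + 1)) * (2 * T + 1) := by
    rw [prod_range_succ']
    push_cast
    refine congrArg₂ _ (prod_congr rfl fun j _ => by ring) (by ring)
  have hQ' : ∏ j ∈ range (k+1), (2 * (T + 1 + (j:ℝ)) + 1)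
      = (∏ j ∈ range k, (2 * (T + 1 + j) + 1)) * (2 * (T + 1 + k) + 1) :=
    prod_range_succ _ _
  have hQpos : 0 < ∏ j ∈ range k, (2 * (T + 1 + (j:ℝ)) + 1) :=
    prod_pos fun j _ => by positivity
  rw [hP, hP', hQ, hQ']
  have h1 : (2 * T + 1) ≠ 0 := by positivity
  have h2 : (2 * (T + 1 + (k:ℝ)) + 1) ≠ 0 := by positivity
  field_simp
  ring

lemma rf_key_identity' (ℓ : ℕ) (hℓ : 1 ≤ ℓ) (x : ℝ) (r s : ℕ) :
    (∏ j ∈ range ℓ, (x + j)) / (∏ j ∈ range ℓ, (2 * ((r:ℝ) + (↑(s+1):ℝ) + j) + 1))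
      + ((∏ j ∈ range ℓ, (x + 1 + j)) - ∏ j ∈ range ℓ, (x + j))
        / (∏ j ∈ range ℓ, (2 * ((r:ℝ) + (↑(s+1):ℝ) + j) + 1))
          * (2 * x / (2 * ((r+s : ℕ):ℝ) + 1))
    = (∏ j ∈ range ℓ, (x + j)) / ∏ j ∈ range ℓ, (2 * ((r:ℝ) + (s:ℝ) + j) + 1) := by
  have e1 : ∏ j ∈ range ℓ, (2 * ((r:ℝ) + (↑(s+1):ℝ) + j) + 1)
      = ∏ j ∈ range ℓ, (2 * (((r:ℝ) + (s:ℝ)) + 1 + j) + 1) :=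
    prod_congr rfl fun j _ => by push_cast; ring
  have e2 : ((r+s : ℕ):ℝ) = (r:ℝ) + (s:ℝ) := by push_cast; ring
  rw [e1, e2]
  exact rf_key_identity ℓ hℓ x ((r:ℝ) + (s:ℝ)) (by positivity)

lemma rf_prod_bound (ℓ : ℕ) (x C : ℝ) (hx0 : 0 ≤ x) (hxC : x ≤ C) :
    |∏ j ∈ range ℓ, (x + (j:ℝ))| ≤ (C + ℓ) ^ ℓ := by
  have h0 : (0:ℝ) ≤ C := hx0.trans hxC
  rw [abs_of_nonneg (prod_nonneg fun j _ => by positivity)]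
  calc ∏ j ∈ range ℓ, (x + (j:ℝ)) ≤ ∏ _j ∈ range ℓ, (C + (ℓ:ℝ)) := by
        refine prod_le_prod (fun j _ => by positivity) (fun j hj => ?_)
        have : (j:ℝ) ≤ (ℓ:ℝ) := by exact_mod_cast (mem_range.1 hj).le
        linarith
    _ = (C + ℓ) ^ ℓ := by rw [prod_const, card_range]

/-- For the size process `X(t)` of the tree rooted at a looping vertex `r`
(`X(r) = 1`, and `X(t+1) = X(t)+1` with conditional probability `2X(t)/(2t+1)`,
else `X(t+1) = X(t)`), the process
`X(t)(X(t)+1)⋯(X(t)+ℓ-1) / ∏_{j<ℓ} (2(t+j)+1)`, `t ≥ r`, is a martingale. -/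
theorem rising_factorial_martingale
    {Ω : Type*} {m0 : MeasurableSpace Ω} (μ : Measure Ω) [IsProbabilityMeasure μ]
    (ℱ : Filtration ℕ m0) (r : ℕ) (hr : 1 ≤ r) (X : ℕ → Ω → ℕ)
    (hadp : Adapted ℱ (fun t ω => (X t ω : ℝ)))
    (hinit : ∀ ω, X r ω = 1)
    (hstep : ∀ t, r ≤ t → ∀ᵐ ω ∂μ, X (t + 1) ω = X t ω + 1 ∨ X (t + 1) ω = X t ω)
    (htrans : ∀ t, r ≤ t →
      μ[Set.indicator {ω | X (t + 1) ω = X t ω + 1} (fun _ => (1 : ℝ)) | ℱ t]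
        =ᵐ[μ] fun ω => (2 * (X t ω : ℝ)) / (2 * (t : ℝ) + 1))
    (ℓ : ℕ) (hℓ : 1 ≤ ℓ) :
    Martingale
      (fun s ω => (∏ j ∈ Finset.range ℓ, ((X (r + s) ω : ℝ) + j)) /
        ∏ j ∈ Finset.range ℓ, (2 * ((r : ℝ) + s + j) + 1))
      ⟨fun s => ℱ (r + s), fun _ _ hab => ℱ.mono (by omega), fun s => ℱ.le _⟩ μ := by
  -- continuity of the rising factorial polynomials
  have hc1 : Continuous fun x : ℝ => ∏ j ∈ range ℓ, (x + (j:ℝ)) :=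
    continuous_finset_prod _ fun j _ => by continuity
  have hc2 : Continuous fun x : ℝ => ∏ j ∈ range ℓ, (x + 1 + (j:ℝ)) :=
    continuous_finset_prod _ fun j _ => by continuity
  -- measurability of the numerators
  have hNm : ∀ t, StronglyMeasurable[ℱ t] fun ω => ∏ j ∈ range ℓ, ((X t ω : ℝ) + j) :=
    fun t => hc1.comp_stronglyMeasurable (hadp t).stronglyMeasurable
  have hNm' : ∀ t, StronglyMeasurable[ℱ t] fun ω => ∏ j ∈ range ℓ, ((X t ω : ℝ) + 1 + j) :=
    fun t => hc2.comp_stronglyMeasurable (hadp t).stronglyMeasurable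
  -- positivity of the denominators
  have hDpos : ∀ s : ℕ, (0:ℝ) < ∏ j ∈ range ℓ, (2 * ((r:ℝ) + (s:ℝ) + j) + 1) :=
    fun s => prod_pos fun j _ => by positivity
  have hDone : ∀ s : ℕ, (1:ℝ) ≤ ∏ j ∈ range ℓ, (2 * ((r:ℝ) + (s:ℝ) + j) + 1) := by
    intro s
    calc (1:ℝ) = ∏ _j ∈ range ℓ, (1:ℝ) := by rw [prod_const_one]
      _ ≤ _ := prod_le_prod (fun j _ => by norm_num) (fun j _ => by
        have h1 : (0:ℝ) ≤ (r:ℝ) + (s:ℝ) + (j:ℝ) := by positivity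
        linarith)
  -- a.e. bound on X
  have hae : ∀ᵐ ω ∂μ, ∀ s : ℕ, X (r + s) ω ≤ s + 1 := by
    have h := ae_all_iff.2 fun s : ℕ => hstep (r + s) (Nat.le_add_right _ _)
    filter_upwards [h] with ω hω
    intro s
    induction s with
    | zero => simpa using (hinit ω).le
    | succ n ih =>
        have h1 := hω n
        show X (r + n + 1) ω ≤ n + 1 + 1
        rcases h1 with h1 | h1 <;> omega
  -- integrability helper
  have hbddint : ∀ (g : Ω → ℝ) (C : ℝ), AEStronglyMeasurable g μ →
      (∀ᵐ ω ∂μ, ‖g ω‖ ≤ C) → Integrable g μ :=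
    fun g C hm hb => Integrable.mono' (integrable_const C) hm hb
  -- dividing by a constant preserves strong measurability
  have hdiv : ∀ {m : MeasurableSpace Ω} (f : Ω → ℝ) (d : ℝ), StronglyMeasurable[m] f →
      StronglyMeasurable[m] (fun ω => f ω / d) := fun f d hf => by
    simpa [div_eq_mul_inv] using hf.mul_const d⁻¹
  refine martingale_nat ?_ ?_ ?_
  · -- adapted
    intro s
    show StronglyMeasurable[ℱ (r + s)]
      fun ω => (∏ j ∈ range ℓ, ((X (r + s) ω : ℝ) + j)) /
        ∏ j ∈ range ℓ, (2 * ((r:ℝ) + (s:ℝ) + j) + 1)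
    exact hdiv _ _ (hNm (r + s))
  · -- integrable
    intro s
    refine hbddint _ (((s:ℝ) + 1 + ℓ) ^ ℓ)
      ((hdiv _ _ (hNm (r+s))).mono (ℱ.le _)).aestronglyMeasurable ?_
    filter_upwards [hae] with ω hω
    have hx : (X (r+s) ω : ℝ) ≤ (s:ℝ) + 1 := by exact_mod_cast hω s
    have hN0 : (0:ℝ) ≤ ∏ j ∈ range ℓ, ((X (r+s) ω : ℝ) + j) :=
      prod_nonneg fun j _ => by positivity
    rw [Real.norm_eq_abs, abs_of_nonneg (div_nonneg hN0 (hDpos s).le)]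
    calc (∏ j ∈ range ℓ, ((X (r+s) ω : ℝ) + j)) /
          ∏ j ∈ range ℓ, (2 * ((r:ℝ) + (s:ℝ) + j) + 1)
        ≤ ∏ j ∈ range ℓ, ((X (r+s) ω : ℝ) + j) := div_le_self hN0 (hDone s)
      _ ≤ ((s:ℝ) + 1 + ℓ) ^ ℓ := by
          have := rf_prod_bound ℓ (X (r+s) ω : ℝ) ((s:ℝ) + 1) (Nat.cast_nonneg _) hx
          rwa [abs_of_nonneg hN0] at this
  · -- the martingale condition
    intro s
    show (fun ω => (∏ j ∈ range ℓ, ((X (r + s) ω : ℝ) + j)) /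
          ∏ j ∈ range ℓ, (2 * ((r:ℝ) + (s:ℝ) + j) + 1))
        =ᵐ[μ] μ[(fun ω => (∏ j ∈ range ℓ, ((X (r + (s+1)) ω : ℝ) + j)) /
          ∏ j ∈ range ℓ, (2 * ((r:ℝ) + (↑(s+1):ℝ) + j) + 1)) | ℱ (r + s)]
    set Dv : ℝ := ∏ j ∈ range ℓ, (2 * ((r:ℝ) + (↑(s+1):ℝ) + j) + 1) with hDvdef
    have hDvpos : (0:ℝ) < Dv := prod_pos fun j _ => by positivity
    set A : Set Ω := {ω | X (r + s + 1) ω = X (r + s) ω + 1} with hAdef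
    have hA : MeasurableSet A := by
      have : A = {ω | (X (r + s + 1) ω : ℝ) = (X (r + s) ω : ℝ) + 1} := by
        ext ω
        simp only [hAdef, Set.mem_setOf_eq]
        exact_mod_cast Iff.rfl
      rw [this]
      exact measurableSet_eq_fun
        ((hadp (r+s+1)).mono (ℱ.le _) le_rfl)
        (((hadp (r+s)).mono (ℱ.le _) le_rfl).add measurable_const)
    set I : Ω → ℝ := A.indicator (fun _ => (1:ℝ)) with hIdef
    have hIint : Integrable I μ := (integrable_const (1:ℝ)).indicator hA
    set h2 : Ω → ℝ := fun ω => (∏ j ∈ range ℓ, ((X (r + s) ω : ℝ) + j)) / Dv with h2def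
    set c : Ω → ℝ := fun ω =>
      ((∏ j ∈ range ℓ, ((X (r + s) ω : ℝ) + 1 + j)) -
        ∏ j ∈ range ℓ, ((X (r + s) ω : ℝ) + j)) / Dv with hcdef
    -- a.e. bounds
    have hbX : ∀ᵐ ω ∂μ, (X (r + s) ω : ℝ) ≤ (s:ℝ) + 1 := by
      filter_upwards [hae] with ω hω; exact_mod_cast hω s
    have hboundN : ∀ ω, (X (r + s) ω : ℝ) ≤ (s:ℝ) + 1 →
        |∏ j ∈ range ℓ, ((X (r + s) ω : ℝ) + j)| ≤ ((s:ℝ) + 2 + ℓ) ^ ℓ := by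
      intro ω hω
      exact rf_prod_bound ℓ _ ((s:ℝ) + 2) (Nat.cast_nonneg _) (by linarith)
    have hboundN' : ∀ ω, (X (r + s) ω : ℝ) ≤ (s:ℝ) + 1 →
        |∏ j ∈ range ℓ, ((X (r + s) ω : ℝ) + 1 + j)| ≤ ((s:ℝ) + 2 + ℓ) ^ ℓ := by
      intro ω hω
      exact rf_prod_bound ℓ _ ((s:ℝ) + 2) (by positivity) (by linarith)
    have h2m : StronglyMeasurable[ℱ (r + s)] h2 := hdiv _ _ (hNm (r+s))
    have hcm : StronglyMeasurable[ℱ (r + s)] c :=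
      hdiv _ _ ((hNm' (r+s)).sub (hNm (r+s)))
    have h2int : Integrable h2 μ := by
      refine hbddint _ (((s:ℝ) + 2 + ℓ) ^ ℓ / Dv) (h2m.mono (ℱ.le _)).aestronglyMeasurable ?_
      filter_upwards [hbX] with ω hω
      rw [h2def, Real.norm_eq_abs, abs_div, abs_of_pos hDvpos]
      exact div_le_div_of_nonneg_right (hboundN ω hω) hDvpos.le |>.trans_eq rfl
    have hcIint : Integrable (c * I) μ := by
      refine hbddint _ (2 * ((s:ℝ) + 2 + ℓ) ^ ℓ / Dv)
        (((hcm.mono (ℱ.le _)).mul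
          ((stronglyMeasurable_const.indicator hA))).aestronglyMeasurable) ?_
      filter_upwards [hbX] with ω hω
      have hI01 : |I ω| ≤ 1 := by
        rw [hIdef]
        by_cases h : ω ∈ A <;> simp [Set.indicator_apply, h]
      have hc_abs : |c ω| ≤ 2 * ((s:ℝ) + 2 + ℓ) ^ ℓ / Dv := by
        rw [hcdef, abs_div, abs_of_pos hDvpos]
        refine div_le_div_of_nonneg_right ?_ hDvpos.le
        calc |∏ j ∈ range ℓ, ((X (r + s) ω : ℝ) + 1 + j) -
              ∏ j ∈ range ℓ, ((X (r + s) ω : ℝ) + j)|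
            ≤ |∏ j ∈ range ℓ, ((X (r + s) ω : ℝ) + 1 + j)| +
              |∏ j ∈ range ℓ, ((X (r + s) ω : ℝ) + j)| := abs_sub _ _
          _ ≤ 2 * ((s:ℝ) + 2 + ℓ) ^ ℓ := by
              have := hboundN ω hω; have := hboundN' ω hω; linarith
      rw [Real.norm_eq_abs, Pi.mul_apply, abs_mul]
      calc |c ω| * |I ω| ≤ |c ω| * 1 := by
            exact mul_le_mul_of_nonneg_left hI01 (abs_nonneg _)
        _ = |c ω| := mul_one _
        _ ≤ _ := hc_abs
    -- decomposition of the next step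
    have e1 : (fun ω => (∏ j ∈ range ℓ, ((X (r + (s+1)) ω : ℝ) + j)) / Dv)
        =ᵐ[μ] h2 + c * I := by
      filter_upwards [hstep (r + s) (Nat.le_add_right _ _)] with ω hω
      have hidx : X (r + (s+1)) ω = X (r + s + 1) ω := by norm_num [Nat.add_assoc]
      rcases hω with h1 | h1
      · have hIone : I ω = 1 := by
          rw [hIdef]; exact Set.indicator_of_mem (by exact h1) _
        simp only [Pi.add_apply, Pi.mul_apply, h2def, hcdef, hIone, hidx, h1]
        push_cast
        ring
      · have hIzero : I ω = 0 := by
          rw [hIdef]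
          refine Set.indicator_of_notMem ?_ _
          intro hmem
          rw [hAdef] at hmem
          simp only [Set.mem_setOf_eq] at hmem
          omega
        simp only [Pi.add_apply, Pi.mul_apply, h2def, hcdef, hIzero, hidx, h1]
        ring
    -- the conditional expectation computation
    refine Filter.EventuallyEq.symm ?_
    calc μ[(fun ω => (∏ j ∈ range ℓ, ((X (r + (s+1)) ω : ℝ) + j)) / Dv) | ℱ (r + s)]
        =ᵐ[μ] μ[h2 + c * I | ℱ (r + s)] := condExp_congr_ae e1
      _ =ᵐ[μ] μ[h2 | ℱ (r + s)] + μ[c * I | ℱ (r + s)] := condExp_add h2int hcIint _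
      _ =ᵐ[μ] h2 + c * μ[I | ℱ (r + s)] := by
          rw [condExp_of_stronglyMeasurable (ℱ.le _) h2m h2int]
          exact Filter.EventuallyEq.add (Filter.EventuallyEq.refl _ _)
            (condExp_mul_of_stronglyMeasurable_left hcm hcIint hIint)
      _ =ᵐ[μ] fun ω => h2 ω + c ω *
            ((2 * (X (r + s) ω : ℝ)) / (2 * ((r + s : ℕ):ℝ) + 1)) := by
          filter_upwards [htrans (r + s) (Nat.le_add_right _ _)] with ω hω
          simp only [Pi.add_apply, Pi.mul_apply, hIdef, hAdef]
          rw [hω]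
      _ =ᵐ[μ] fun ω => (∏ j ∈ range ℓ, ((X (r + s) ω : ℝ) + j)) /
            ∏ j ∈ range ℓ, (2 * ((r:ℝ) + (s:ℝ) + j) + 1) := by
          refine Filter.Eventually.of_forall fun ω => ?_
          simp only [h2def, hcdef, hDvdef]
          exact rf_key_identity' ℓ hℓ (X (r + s) ω : ℝ) r s
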